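/- Let n = qk + r with 0 ≤ r < k and q ≥ 1. Then (k+r)·2^q − k < c_0 · k · 2^{n/k}, where c_0 = 2/(2^{1/log 2} · log 2). -/

import Mathlib

lemma stmt3_key (x : ℝ) :
    1 + x ≤ 2 / ((2 : ℝ) ^ (1 / Real.log 2) * Real.log 2) * (2 : ℝ) ^ x := by
  set L := Real.log 2 with hLdef
  have hL : 0 < L := Real.log_pos (by norm_num)
  have h2 : (0:ℝ) < 2 := by norm_num
  have hsplit : (2:ℝ) ^ x = (2:ℝ) ^ (1/L - 1) * (2:ℝ) ^ (x - (1/L - 1)) := by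
    rw [← Real.rpow_add h2]; ring_nf
  have hexp : (2:ℝ) ^ (x - (1/L - 1)) = Real.exp ((x - (1/L - 1)) * L) := by
    rw [Real.rpow_def_of_pos h2, ← hLdef]; ring_nf
  have hge : 1 + (x - (1/L - 1)) * L ≤ Real.exp ((x - (1/L - 1)) * L) := by
    linarith [Real.add_one_le_exp ((x - (1/L - 1)) * L)]
  have hpow : (0:ℝ) < (2:ℝ) ^ (1/L) := Real.rpow_pos_of_pos h2 _
  have hc : 2 / ((2:ℝ) ^ (1/L) * L) * (2:ℝ) ^ (1/L - 1) = 1/L := by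
    rw [Real.rpow_sub h2, Real.rpow_one]
    field_simp
  have hcpos : (0:ℝ) < 2 / ((2:ℝ) ^ (1/L) * L) := by positivity
  calc 1 + x = (1/L) * (1 + (x - (1/L - 1)) * L) := by field_simp; ring
    _ ≤ (1/L) * Real.exp ((x - (1/L - 1)) * L) := by
        apply mul_le_mul_of_nonneg_left hge (by positivity)
    _ = 2 / ((2:ℝ) ^ (1/L) * L) * (2:ℝ) ^ x := by
        rw [hsplit, hexp, ← mul_assoc, hc]

/-- (k+r)·2^q − k < c₀·k·2^{n/k} where c₀ = 2/(2^{1/log 2}·log 2). -/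
theorem stmt3 (n q k r : ℕ) (hq : 1 ≤ q) (hr : r < k) (hn : n = q * k + r) :
    ((k : ℝ) + r) * 2 ^ q - k
      < (2 / ((2 : ℝ) ^ (1 / Real.log 2) * Real.log 2)) * k
          * (2 : ℝ) ^ ((n : ℝ) / (k : ℝ)) := by
  have hk : 0 < k := lt_of_le_of_lt (Nat.zero_le r) hr
  have hkR : (0:ℝ) < k := by exact_mod_cast hk
  have h2 : (0:ℝ) < 2 := by norm_num
  have hdiv : (n : ℝ) / k = (q : ℝ) + (r : ℝ) / k := by
    subst hn; push_cast; field_simp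
  have hsplit : (2:ℝ) ^ ((n : ℝ) / (k : ℝ)) = 2 ^ q * (2:ℝ) ^ ((r:ℝ)/k) := by
    rw [hdiv, Real.rpow_add h2, Real.rpow_natCast]
  set c := 2 / ((2 : ℝ) ^ (1 / Real.log 2) * Real.log 2) with hc
  have hkey := stmt3_key ((r:ℝ)/k)
  have hmul : (k:ℝ) + r ≤ c * k * (2:ℝ) ^ ((r:ℝ)/k) := by
    have := mul_le_mul_of_nonneg_right hkey hkR.le
    calc (k:ℝ) + r = (1 + (r:ℝ)/k) * k := by field_simp
      _ ≤ c * (2:ℝ) ^ ((r:ℝ)/k) * k := this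
      _ = c * k * (2:ℝ) ^ ((r:ℝ)/k) := by ring
  have hqpos : (0:ℝ) < 2 ^ q := by positivity
  have : ((k:ℝ) + r) * 2 ^ q ≤ c * k * (2:ℝ) ^ ((r:ℝ)/k) * 2 ^ q :=
    mul_le_mul_of_nonneg_right hmul hqpos.le
  rw [hsplit]
  nlinarith [hkR]
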